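/- Let k ∈ ℕ with k ≥ 1. (i) There exists a constant C > 0 such that |∂_a^k h(r,a,t)| ≤ C r^{2k} e^{−tr²} Σ_{j=0}^{k} (tr²)^j for all 0 ≤ r ≤ 1/3, all 0 ≤ a ≤ 1 and all t > 0. (ii) There exist constants c_0, c_1, …, c_k such that ∂_a^k h(r,a,t) evaluated at a = 0 equals r^{2k} e^{−tr²} Σ_{j=0}^{k} c_j (tr²)^j for all r ≥ 0 and all t > 0. The constants C and c_0, …, c_k are independent of r, a and t. -/

import Mathlib

open MvPolynomial Finset Real

noncomputable section Stmt14Aux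

def stmt14_pStep (P : MvPolynomial (Fin 3) ℝ) : MvPolynomial (Fin 3) ℝ :=
  (C 2 * X 0 ^ 2 + C (-4) * (X 2 * X 0 * X 1 ^ 2)) * P
    + C 2 * X 0 ^ 3 * pderiv 0 P + C 2 * (X 0 * X 1 ^ 2) * pderiv 1 P

def stmt14_pK : ℕ → MvPolynomial (Fin 3) ℝ
  | 0 => 1
  | k + 1 => stmt14_pStep (stmt14_pK k)

lemma stmt14_degreeOf_pderiv_le (i : Fin 3) (P : MvPolynomial (Fin 3) ℝ) :
    degreeOf 2 (pderiv i P) ≤ degreeOf 2 P := by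
  rw [degreeOf_le_iff]
  intro m hm
  conv at hm => rw [P.as_sum, map_sum]
  obtain ⟨v, hv, hmv⟩ := Finset.mem_biUnion.mp (MvPolynomial.support_sum hm)
  rw [pderiv_monomial] at hmv
  have h := MvPolynomial.support_monomial_subset hmv
  rw [Finset.mem_singleton] at h
  refine le_trans ?_ (monomial_le_degreeOf 2 hv)
  rw [h, Finsupp.tsub_apply]
  exact Nat.sub_le _ _

lemma stmt14_degreeOf_pK (k : ℕ) : degreeOf 2 (stmt14_pK k) ≤ k := by
  induction k with
  | zero => simpa [stmt14_pK] using (degreeOf_C (1:ℝ) (2 : Fin 3)).le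
  | succ k ih =>
    have hX0 : degreeOf (2 : Fin 3) (X 0 : MvPolynomial (Fin 3) ℝ) ≤ 0 := by
      rw [degreeOf_X]; simp
    have hX1 : degreeOf (2 : Fin 3) (X 1 : MvPolynomial (Fin 3) ℝ) ≤ 0 := by
      rw [degreeOf_X]; simp
    have hX2 : degreeOf (2 : Fin 3) (X 2 : MvPolynomial (Fin 3) ℝ) ≤ 1 := by
      rw [degreeOf_X]; simp
    have hpow : ∀ (q : MvPolynomial (Fin 3) ℝ) (n : ℕ), degreeOf 2 q ≤ 0 →
        degreeOf 2 (q ^ n) ≤ 0 := by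
      intro q n hq
      induction n with
      | zero => simpa using (degreeOf_C (1:ℝ) (2 : Fin 3)).le
      | succ n ihn =>
        rw [pow_succ]
        exact le_trans (degreeOf_mul_le _ _ _) (by omega)
    have hC : ∀ c : ℝ, degreeOf (2 : Fin 3) (C c : MvPolynomial (Fin 3) ℝ) ≤ 0 :=
      fun c => (degreeOf_C c _).le
    have h1 : degreeOf (2:Fin 3)
        ((C 2 * X 0 ^ 2 + C (-4) * (X 2 * X 0 * X 1 ^ 2)) : MvPolynomial (Fin 3) ℝ) ≤ 1 := by
      have a1 : degreeOf (2:Fin 3) (C 2 * (X 0:MvPolynomial (Fin 3) ℝ) ^ 2) ≤ 0 := by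
        have := hpow (X 0) 2 hX0
        have := hC (2:ℝ)
        exact le_trans (degreeOf_mul_le _ _ _) (by omega)
      have a2 : degreeOf (2:Fin 3) (C (-4) * ((X 2:MvPolynomial (Fin 3) ℝ) * X 0 * X 1 ^ 2)) ≤ 1 := by
        have b1 : degreeOf (2:Fin 3) ((X 2:MvPolynomial (Fin 3) ℝ) * X 0) ≤ 1 :=
          le_trans (degreeOf_mul_le _ _ _) (by omega)
        have b2 := hpow (X 1) 2 hX1
        have b3 : degreeOf (2:Fin 3) ((X 2:MvPolynomial (Fin 3) ℝ) * X 0 * X 1 ^ 2) ≤ 1 :=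
          le_trans (degreeOf_mul_le _ _ _) (by omega)
        have := hC (-4:ℝ)
        exact le_trans (degreeOf_mul_le _ _ _) (by omega)
      exact le_trans (degreeOf_add_le _ _ _) (by omega)
    have h2 : degreeOf (2:Fin 3) (C 2 * (X 0:MvPolynomial (Fin 3) ℝ) ^ 3) ≤ 0 := by
      have := hpow (X 0) 3 hX0
      have := hC (2:ℝ)
      exact le_trans (degreeOf_mul_le _ _ _) (by omega)
    have h3 : degreeOf (2:Fin 3) (C 2 * ((X 0:MvPolynomial (Fin 3) ℝ) * X 1 ^ 2)) ≤ 0 := by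
      have := hpow (X 1) 2 hX1
      have := hC (2:ℝ)
      have : degreeOf (2:Fin 3) ((X 0:MvPolynomial (Fin 3) ℝ) * X 1 ^ 2) ≤ 0 := by
        have := hpow (X 1) 2 hX1
        exact le_trans (degreeOf_mul_le _ _ _) (by omega)
      have := hC (2:ℝ)
      exact le_trans (degreeOf_mul_le _ _ _) (by omega)
    have d0 := le_trans (stmt14_degreeOf_pderiv_le 0 (stmt14_pK k)) ih
    have d1 := le_trans (stmt14_degreeOf_pderiv_le 1 (stmt14_pK k)) ih
    show degreeOf 2 (stmt14_pStep (stmt14_pK k)) ≤ k + 1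
    unfold stmt14_pStep
    refine le_trans (degreeOf_add_le _ _ _) (max_le (le_trans (degreeOf_add_le _ _ _) (max_le ?_ ?_)) ?_)
    · exact le_trans (degreeOf_mul_le _ _ _) (by omega)
    · exact le_trans (degreeOf_mul_le _ _ _) (by omega)
    · exact le_trans (degreeOf_mul_le _ _ _) (by omega)





def stmt14_fh (r t a : ℝ) : ℝ :=
  (Real.sqrt (1 - 4 * a * r ^ 2))⁻¹ *
    Real.exp (-(2 * t * r ^ 2) / (1 + Real.sqrt (1 - 4 * a * r ^ 2)))

def stmt14_vv (r t a : ℝ) : Fin 3 → ℝ :=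
  ![(Real.sqrt (1 - 4 * a * r ^ 2))⁻¹, (1 + Real.sqrt (1 - 4 * a * r ^ 2))⁻¹, t * r ^ 2]

variable {r t a : ℝ}

lemma stmt14_hasDerivAt_sqrt (h : 0 < 1 - 4 * a * r ^ 2) :
    HasDerivAt (fun b => Real.sqrt (1 - 4 * b * r ^ 2))
      (-(2 * r ^ 2) / Real.sqrt (1 - 4 * a * r ^ 2)) a := by
  have hinner : HasDerivAt (fun b : ℝ => 1 - 4 * b * r ^ 2) (-(4 * r ^ 2)) a := by
    have h1 := ((hasDerivAt_id a).const_mul (4 * r ^ 2)).const_sub 1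
    have heq : (fun b : ℝ => 1 - 4 * r ^ 2 * id b) = fun b : ℝ => 1 - 4 * b * r ^ 2 := by
      funext b; simp [id]; ring
    rw [heq] at h1
    refine h1.congr_deriv ?_
    ring
  have hs := (Real.hasDerivAt_sqrt h.ne').comp a hinner
  have heq2 : 1 / (2 * Real.sqrt (1 - 4 * a * r ^ 2)) * -(4 * r ^ 2)
      = -(2 * r ^ 2) / Real.sqrt (1 - 4 * a * r ^ 2) := by
    have hs0 : Real.sqrt (1 - 4 * a * r ^ 2) ≠ 0 := (Real.sqrt_pos.mpr h).ne'
    field_simp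
    ring
  rw [← heq2]
  exact hs

lemma stmt14_hasDerivAt_x (h : 0 < 1 - 4 * a * r ^ 2) :
    HasDerivAt (fun b => (Real.sqrt (1 - 4 * b * r ^ 2))⁻¹)
      (2 * r ^ 2 * ((Real.sqrt (1 - 4 * a * r ^ 2))⁻¹) ^ 3) a := by
  have hs : 0 < Real.sqrt (1 - 4 * a * r ^ 2) := Real.sqrt_pos.mpr h
  have h1 := (stmt14_hasDerivAt_sqrt h).inv hs.ne'
  refine h1.congr_deriv ?_
  set s := Real.sqrt (1 - 4 * a * r ^ 2) with hsdef
  field_simp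

lemma stmt14_hasDerivAt_y (h : 0 < 1 - 4 * a * r ^ 2) :
    HasDerivAt (fun b => (1 + Real.sqrt (1 - 4 * b * r ^ 2))⁻¹)
      (2 * r ^ 2 * (Real.sqrt (1 - 4 * a * r ^ 2))⁻¹ *
        ((1 + Real.sqrt (1 - 4 * a * r ^ 2))⁻¹) ^ 2) a := by
  have hs : 0 < Real.sqrt (1 - 4 * a * r ^ 2) := Real.sqrt_pos.mpr h
  have h1s : (0:ℝ) < 1 + Real.sqrt (1 - 4 * a * r ^ 2) := by positivity
  have h1 := ((stmt14_hasDerivAt_sqrt h).const_add 1).inv h1s.ne'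
  refine h1.congr_deriv ?_
  set s := Real.sqrt (1 - 4 * a * r ^ 2) with hsdef
  have h1s' : (1:ℝ) + s ≠ 0 := h1s.ne'
  field_simp

lemma stmt14_hasDerivAt_fh (h : 0 < 1 - 4 * a * r ^ 2) :
    HasDerivAt (stmt14_fh r t)
      (stmt14_fh r t a * r ^ 2 *
        (2 * ((Real.sqrt (1 - 4 * a * r ^ 2))⁻¹) ^ 2
          + (-4) * (t * r ^ 2) * (Real.sqrt (1 - 4 * a * r ^ 2))⁻¹ *
            ((1 + Real.sqrt (1 - 4 * a * r ^ 2))⁻¹) ^ 2)) a := by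
  have hs : 0 < Real.sqrt (1 - 4 * a * r ^ 2) := Real.sqrt_pos.mpr h
  have hE : HasDerivAt
      (fun b => Real.exp (-(2 * t * r ^ 2) / (1 + Real.sqrt (1 - 4 * b * r ^ 2))))
      (Real.exp (-(2 * t * r ^ 2) / (1 + Real.sqrt (1 - 4 * a * r ^ 2))) *
        (-(2 * t * r ^ 2) * (2 * r ^ 2 * (Real.sqrt (1 - 4 * a * r ^ 2))⁻¹ *
          ((1 + Real.sqrt (1 - 4 * a * r ^ 2))⁻¹) ^ 2))) a := by
    have hi := (stmt14_hasDerivAt_y (r := r) h).const_mul (-(2 * t * r ^ 2))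
    have heq : (fun b => -(2 * t * r ^ 2) * (1 + Real.sqrt (1 - 4 * b * r ^ 2))⁻¹)
        = fun b => -(2 * t * r ^ 2) / (1 + Real.sqrt (1 - 4 * b * r ^ 2)) := by
      funext b; rw [div_eq_mul_inv]
    rw [heq] at hi
    have h2 := hi.exp
    exact h2
  have hx := stmt14_hasDerivAt_x (r := r) h
  have hmul := hx.mul hE
  have hfun : (fun b => (Real.sqrt (1 - 4 * b * r ^ 2))⁻¹ *
      Real.exp (-(2 * t * r ^ 2) / (1 + Real.sqrt (1 - 4 * b * r ^ 2)))) = stmt14_fh r t := rfl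
  change HasDerivAt (stmt14_fh r t) _ a at hmul
  convert hmul using 1
  unfold stmt14_fh
  ring

lemma stmt14_hasDerivAt_eval (P : MvPolynomial (Fin 3) ℝ) (h : 0 < 1 - 4 * a * r ^ 2) :
    HasDerivAt (fun b => eval (stmt14_vv r t b) P)
      (2 * r ^ 2 * ((Real.sqrt (1 - 4 * a * r ^ 2))⁻¹ ^ 3 * eval (stmt14_vv r t a) (pderiv 0 P)
        + (Real.sqrt (1 - 4 * a * r ^ 2))⁻¹ * ((1 + Real.sqrt (1 - 4 * a * r ^ 2))⁻¹) ^ 2 *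
            eval (stmt14_vv r t a) (pderiv 1 P))) a := by
  induction P using MvPolynomial.induction_on with
  | C c =>
    have heq : (fun b => eval (stmt14_vv r t b) (C c)) = fun _ => c := by
      funext b; simp
    rw [heq]
    simpa [pderiv_C] using hasDerivAt_const a c
  | add p q hp hq =>
    have heq : (fun b => eval (stmt14_vv r t b) (p + q))
        = fun b => eval (stmt14_vv r t b) p + eval (stmt14_vv r t b) q := by
      funext b; simp
    rw [heq]
    refine (hp.add hq).congr_deriv ?_
    simp only [map_add]
    ring
  | mul_X p n hp =>
    have h3 : n = 0 ∨ n = 1 ∨ n = 2 := by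
      fin_cases n <;> simp
    rcases h3 with rfl | rfl | rfl
    · have hfe : (fun b => eval (stmt14_vv r t b) (p * X 0))
          = fun b => eval (stmt14_vv r t b) p * (Real.sqrt (1 - 4 * b * r ^ 2))⁻¹ := by
        funext b; simp [stmt14_vv]
      rw [hfe]
      have hx := stmt14_hasDerivAt_x (r := r) h
      refine (hp.mul hx).congr_deriv ?_
      have e0 : stmt14_vv r t a 0 = (Real.sqrt (1 - 4 * a * r ^ 2))⁻¹ := by simp [stmt14_vv]
      simp only [pderiv_mul, pderiv_X_self, pderiv_X_of_ne (by decide : (0:Fin 3) ≠ 1),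
        map_add, eval_mul, eval_X, mul_one, map_zero, mul_zero, add_zero, map_one]
      rw [e0]
      ring
    · have hfe : (fun b => eval (stmt14_vv r t b) (p * X 1))
          = fun b => eval (stmt14_vv r t b) p * (1 + Real.sqrt (1 - 4 * b * r ^ 2))⁻¹ := by
        funext b; simp [stmt14_vv]
      rw [hfe]
      have hy := stmt14_hasDerivAt_y (r := r) h
      refine (hp.mul hy).congr_deriv ?_
      have e1 : stmt14_vv r t a 1 = (1 + Real.sqrt (1 - 4 * a * r ^ 2))⁻¹ := by simp [stmt14_vv]
      simp only [pderiv_mul, pderiv_X_self, pderiv_X_of_ne (by decide : (1:Fin 3) ≠ 0),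
        map_add, eval_mul, eval_X, mul_one, map_zero, mul_zero, add_zero, zero_add,
        zero_mul, map_one]
      rw [e1]
      ring
    · have hfe : (fun b => eval (stmt14_vv r t b) (p * X 2))
          = fun b => eval (stmt14_vv r t b) p * (t * r ^ 2) := by
        funext b; simp [stmt14_vv]
      rw [hfe]
      refine (hp.mul_const (t * r ^ 2)).congr_deriv ?_
      have e2 : stmt14_vv r t a 2 = t * r ^ 2 := by simp [stmt14_vv]
      simp only [pderiv_mul, pderiv_X_of_ne (by decide : (2:Fin 3) ≠ 0),
        pderiv_X_of_ne (by decide : (2:Fin 3) ≠ 1), map_add, eval_mul, eval_X,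
        map_zero, mul_zero, add_zero]
      rw [e2]
      ring



lemma stmt14_key (k : ℕ) (r t : ℝ) : ∀ a : ℝ, 0 < 1 - 4 * a * r ^ 2 →
    iteratedDeriv k (stmt14_fh r t) a
      = stmt14_fh r t a * r ^ (2 * k) * eval (stmt14_vv r t a) (stmt14_pK k) := by
  induction k with
  | zero =>
    intro a ha
    simp [stmt14_pK, iteratedDeriv_zero]
  | succ k ih =>
    intro a ha
    rw [iteratedDeriv_succ]
    have hopen : IsOpen {b : ℝ | 0 < 1 - 4 * b * r ^ 2} := by
      have hc : Continuous fun b : ℝ => 1 - 4 * b * r ^ 2 := by continuity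
      exact isOpen_lt continuous_const hc
    have hev : iteratedDeriv k (stmt14_fh r t)
        =ᶠ[nhds a] fun b => stmt14_fh r t b * r ^ (2 * k) * eval (stmt14_vv r t b) (stmt14_pK k) :=
      Filter.eventuallyEq_of_mem (hopen.mem_nhds ha) (fun b hb => ih b hb)
    rw [hev.deriv_eq]
    have hd := ((stmt14_hasDerivAt_fh (t := t) ha).mul_const (r ^ (2 * k))).mul
      (stmt14_hasDerivAt_eval (t := t) (stmt14_pK k) ha)
    change HasDerivAt (fun b => stmt14_fh r t b * r ^ (2 * k) * eval (stmt14_vv r t b) (stmt14_pK k)) _ a at hd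
    rw [hd.deriv]
    show _ = stmt14_fh r t a * r ^ (2 * (k + 1)) * eval (stmt14_vv r t a) (stmt14_pStep (stmt14_pK k))
    have e0 : stmt14_vv r t a 0 = (Real.sqrt (1 - 4 * a * r ^ 2))⁻¹ := by simp [stmt14_vv]
    have e1 : stmt14_vv r t a 1 = (1 + Real.sqrt (1 - 4 * a * r ^ 2))⁻¹ := by simp [stmt14_vv]
    have e2 : stmt14_vv r t a 2 = t * r ^ 2 := by simp [stmt14_vv]
    simp only [stmt14_pStep, map_add, eval_mul, eval_pow, eval_C, eval_X, e0, e1, e2]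
    have hpow : r ^ (2 * (k + 1)) = r ^ (2 * k) * r ^ 2 := by
      rw [← pow_add]; ring_nf
    rw [hpow]
    ring

theorem stmt_14 (k : ℕ) (hk : 1 ≤ k) :
    (∃ C : ℝ, 0 < C ∧ ∀ r ∈ Set.Icc (0:ℝ) (1/3), ∀ a ∈ Set.Icc (0:ℝ) 1, ∀ t : ℝ, 0 < t →
      |iteratedDeriv k
          (fun a' : ℝ => (Real.sqrt (1 - 4 * a' * r ^ 2))⁻¹ *
            Real.exp (-(2 * t * r ^ 2) / (1 + Real.sqrt (1 - 4 * a' * r ^ 2)))) a|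
        ≤ C * r ^ (2 * k) * Real.exp (-t * r ^ 2) * ∑ j ∈ Finset.range (k + 1), (t * r ^ 2) ^ j) ∧
    (∃ c : ℕ → ℝ, ∀ r : ℝ, 0 ≤ r → ∀ t : ℝ, 0 < t →
      iteratedDeriv k
          (fun a' : ℝ => (Real.sqrt (1 - 4 * a' * r ^ 2))⁻¹ *
            Real.exp (-(2 * t * r ^ 2) / (1 + Real.sqrt (1 - 4 * a' * r ^ 2)))) 0
        = r ^ (2 * k) * Real.exp (-t * r ^ 2) *
            ∑ j ∈ Finset.range (k + 1), c j * (t * r ^ 2) ^ j) := by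
  constructor
  · -- part (i)
    set P := stmt14_pK k with hP
    set M : ℝ := ∑ m ∈ P.support, |coeff m P| * 2 ^ (m 0) with hM
    have hM0 : 0 ≤ M := Finset.sum_nonneg fun m _ => by positivity
    refine ⟨2 * M + 1, by linarith, ?_⟩
    intro r hr a ha t ht
    have hr0 : 0 ≤ r := hr.1
    have hr2 : r ^ 2 ≤ 1 / 9 := by nlinarith [hr.2]
    have h : 0 < 1 - 4 * a * r ^ 2 := by nlinarith [ha.1, ha.2, sq_nonneg r]
    have hfun : (fun a' : ℝ => (Real.sqrt (1 - 4 * a' * r ^ 2))⁻¹ *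
        Real.exp (-(2 * t * r ^ 2) / (1 + Real.sqrt (1 - 4 * a' * r ^ 2)))) = stmt14_fh r t := rfl
    rw [hfun, stmt14_key k r t a h]
    set s := Real.sqrt (1 - 4 * a * r ^ 2) with hsdef
    have hs0 : 0 < s := Real.sqrt_pos.mpr h
    have hs1 : s ≤ 1 := Real.sqrt_le_one.mpr (by nlinarith [ha.1, sq_nonneg r])
    have hs2 : (1:ℝ) / 2 ≤ s := by
      have h14 : Real.sqrt (1 / 4) ≤ s := Real.sqrt_le_sqrt (by nlinarith [ha.1, ha.2])
      have : Real.sqrt (1 / 4) = 1 / 2 := by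
        rw [show (1/4:ℝ) = (1/2)^2 by norm_num, Real.sqrt_sq (by norm_num)]
      linarith [this ▸ h14]
    have hx2 : s⁻¹ ≤ 2 := by
      have := inv_anti₀ (by norm_num : (0:ℝ) < 1/2) hs2
      norm_num at this
      linarith
    have hy1 : (1 + s)⁻¹ ≤ 1 := inv_le_one_of_one_le₀ (by linarith)
    set z : ℝ := t * r ^ 2 with hz
    have hz0 : 0 ≤ z := by positivity
    set W : ℝ := ∑ j ∈ Finset.range (k + 1), z ^ j with hW
    have hW0 : 0 ≤ W := Finset.sum_nonneg fun j _ => by positivity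
    have hEle : Real.exp (-(2 * t * r ^ 2) / (1 + s)) ≤ Real.exp (-t * r ^ 2) := by
      rw [Real.exp_le_exp, div_le_iff₀ (by linarith : (0:ℝ) < 1 + s)]
      nlinarith [mul_nonneg ht.le (sq_nonneg r)]
    have hfb : |stmt14_fh r t a| ≤ 2 * Real.exp (-t * r ^ 2) := by
      have hfv : stmt14_fh r t a = s⁻¹ * Real.exp (-(2 * t * r ^ 2) / (1 + s)) := rfl
      rw [hfv, abs_of_nonneg (by positivity)]
      exact mul_le_mul hx2 hEle (Real.exp_pos _).le (by norm_num)
    have heval : |eval (stmt14_vv r t a) P| ≤ M * W := by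
      rw [eval_eq']
      refine le_trans (Finset.abs_sum_le_sum_abs _ _) ?_
      rw [hM, Finset.sum_mul]
      refine Finset.sum_le_sum fun m hm => ?_
      rw [abs_mul]
      have hprod : ∏ i, stmt14_vv r t a i ^ m i = s⁻¹ ^ m 0 * (1 + s)⁻¹ ^ m 1 * z ^ m 2 := by
        rw [Fin.prod_univ_three]
        simp [stmt14_vv, hsdef, hz]
      have hpn : (0:ℝ) ≤ s⁻¹ ^ m 0 * (1 + s)⁻¹ ^ m 1 * z ^ m 2 :=
        mul_nonneg (mul_nonneg (pow_nonneg (by positivity) _) (pow_nonneg (by positivity) _))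
          (pow_nonneg hz0 _)
      rw [hprod, abs_of_nonneg hpn]
      have hzW : z ^ m 2 ≤ W := by
        refine Finset.single_le_sum (f := fun j => z ^ j) (fun j _ => pow_nonneg hz0 _) ?_
        refine Finset.mem_range.mpr (Nat.lt_succ_of_le ?_)
        exact le_trans (monomial_le_degreeOf 2 hm) (stmt14_degreeOf_pK k)
      have hxx : s⁻¹ ^ m 0 ≤ 2 ^ m 0 := pow_le_pow_left₀ (by positivity) hx2 _
      have hyy : (1 + s)⁻¹ ^ m 1 ≤ 1 := pow_le_one₀ (by positivity) hy1
      calc |coeff m P| * (s⁻¹ ^ m 0 * (1 + s)⁻¹ ^ m 1 * z ^ m 2)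
          ≤ |coeff m P| * (2 ^ m 0 * 1 * W) := by
            refine mul_le_mul_of_nonneg_left ?_ (abs_nonneg _)
            refine mul_le_mul (mul_le_mul hxx hyy (by positivity) (by positivity)) hzW
              (by positivity) (by positivity)
        _ = |coeff m P| * 2 ^ m 0 * W := by ring
    calc |stmt14_fh r t a * r ^ (2 * k) * eval (stmt14_vv r t a) P|
        = |stmt14_fh r t a| * r ^ (2 * k) * |eval (stmt14_vv r t a) P| := by
          rw [abs_mul, abs_mul, abs_of_nonneg (by positivity : (0:ℝ) ≤ r ^ (2 * k))]
      _ ≤ (2 * Real.exp (-t * r ^ 2)) * r ^ (2 * k) * (M * W) := by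
          refine mul_le_mul (mul_le_mul hfb le_rfl (by positivity) (by positivity)) heval
            (abs_nonneg _) (by positivity)
      _ ≤ (2 * M + 1) * r ^ (2 * k) * Real.exp (-t * r ^ 2) * W := by
          nlinarith [mul_nonneg (mul_nonneg (pow_nonneg hr0 (2*k)) (Real.exp_pos (-t * r^2)).le) hW0]
  · -- part (ii)
    set P := stmt14_pK k with hP
    refine ⟨fun j => ∑ m ∈ P.support.filter (fun m => m 2 = j),
      coeff m P * (2:ℝ)⁻¹ ^ m 1, ?_⟩
    intro r hr t ht
    have h : 0 < 1 - 4 * 0 * r ^ 2 := by norm_num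
    have hfun : (fun a' : ℝ => (Real.sqrt (1 - 4 * a' * r ^ 2))⁻¹ *
        Real.exp (-(2 * t * r ^ 2) / (1 + Real.sqrt (1 - 4 * a' * r ^ 2)))) = stmt14_fh r t := rfl
    rw [hfun, stmt14_key k r t 0 h]
    have hsq : Real.sqrt (1 - 4 * 0 * r ^ 2) = 1 := by
      rw [show 1 - 4 * 0 * r ^ 2 = (1:ℝ) by ring, Real.sqrt_one]
    have hfh0 : stmt14_fh r t 0 = Real.exp (-t * r ^ 2) := by
      unfold stmt14_fh
      rw [hsq, show -(2 * t * r ^ 2) / (1 + 1) = -t * r ^ 2 by ring]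
      simp
    set z : ℝ := t * r ^ 2 with hz
    have hmaps : ∀ m ∈ P.support, m 2 ∈ Finset.range (k + 1) := fun m hm =>
      Finset.mem_range.mpr (Nat.lt_succ_of_le
        (le_trans (monomial_le_degreeOf 2 hm) (stmt14_degreeOf_pK k)))
    have heval : eval (stmt14_vv r t 0) P
        = ∑ j ∈ Finset.range (k + 1),
            (∑ m ∈ P.support.filter (fun m => m 2 = j), coeff m P * (2:ℝ)⁻¹ ^ m 1) * z ^ j := by
      rw [eval_eq', ← Finset.sum_fiberwise_of_maps_to hmaps
        (fun m => coeff m P * ∏ i, stmt14_vv r t 0 i ^ m i)]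
      refine Finset.sum_congr rfl fun j _ => ?_
      rw [Finset.sum_mul]
      refine Finset.sum_congr rfl fun m hm => ?_
      have hm2 : m 2 = j := (Finset.mem_filter.mp hm).2
      have v0 : stmt14_vv r t 0 0 = 1 := by simp [stmt14_vv, hsq]
      have v1 : stmt14_vv r t 0 1 = (2:ℝ)⁻¹ := by
        simp only [stmt14_vv, Matrix.cons_val_one, Matrix.head_cons, hsq]
        norm_num
      have v2 : stmt14_vv r t 0 2 = z := by simp [stmt14_vv, hz]
      have hprod : ∏ i, stmt14_vv r t 0 i ^ m i = (2:ℝ)⁻¹ ^ m 1 * z ^ m 2 := by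
        rw [Fin.prod_univ_three, v0, v1, v2, one_pow, one_mul]
      rw [hprod, hm2]
      ring
    rw [heval, hfh0]
    ring
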